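/- Let u : ℝ × ℝ → ℝ be smooth with m = u − u_{xx} satisfying m_t + ∂ₓ[sin(u² − u_x²)·m] = 0, and suppose that for every t the functions u(t,·), u_x(t,·), u_{xx}(t,·), u_{xxx}(t,·), u_t(t,·), u_{tx}(t,·), u_{txx}(t,·) are bounded on ℝ. Set M = cos(u² − u_x²)·m·u_x. Then for all (t,x): u_t + sin(u² − u_x²)·u_x = −2·p*(u·M) − 2·[p₋*(u_x·M) − p₊*(u_x·M)], and u_{tx} + sin(u² − u_x²)·u_{xx} = −2·[p₋*(u·M) − p₊*(u·M)] − 2·p*(u_x·M), where the convolutions are taken in the x-variable for each fixed t. -/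

import Mathlib

open MeasureTheory Real Set

/-- The convolution `(p*f)(x) = ∫_ℝ (1/2) e^{-|x-y|} f(y) dy` with `p(x) = (1/2)exp(-|x|)`. -/
noncomputable def pConv (f : ℝ → ℝ) (x : ℝ) : ℝ := ∫ y : ℝ, (1/2) * Real.exp (-|x - y|) * f y

/-- `(p₊*f)(x) = (1/2)∫_{-∞}^{x} e^{y-x} f(y) dy`. -/
noncomputable def pPlus (f : ℝ → ℝ) (x : ℝ) : ℝ := (1/2) * ∫ y in Set.Iic x, Real.exp (y - x) * f y

/-- `(p₋*f)(x) = (1/2)∫_{x}^{∞} e^{x-y} f(y) dy`. -/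
noncomputable def pMinus (f : ℝ → ℝ) (x : ℝ) : ℝ := (1/2) * ∫ y in Set.Ici x, Real.exp (x - y) * f y

/-- Spatial partial derivative `∂ₓ` of a function of `(t, x)`. -/
noncomputable def pdx (f : ℝ → ℝ → ℝ) : ℝ → ℝ → ℝ := fun t x => deriv (fun y => f t y) x

/-- Time partial derivative `∂ₜ` of a function of `(t, x)`. -/
noncomputable def pdt (f : ℝ → ℝ → ℝ) : ℝ → ℝ → ℝ := fun t x => deriv (fun s => f s x) t

/-- The momentum density `m = u - u_{xx}`. -/
noncomputable def mF (u : ℝ → ℝ → ℝ) : ℝ → ℝ → ℝ := fun t x => u t x - pdx (pdx u) t x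

/-- The blow-up quantity `M = cos(u² - u_x²) · m · u_x`. -/
noncomputable def MF (u : ℝ → ℝ → ℝ) : ℝ → ℝ → ℝ :=
  fun t x => Real.cos ((u t x) ^ 2 - (pdx u t x) ^ 2) * mF u t x * pdx u t x

namespace Stmt8Aux

open Filter Topology

/-! ### Elementary helper lemmas -/

lemma abs_mul_le {a b A B : ℝ} (ha : |a| ≤ A) (hb : |b| ≤ B) : |a * b| ≤ A * B := by
  rw [abs_mul]
  exact mul_le_mul ha hb (abs_nonneg _) ((abs_nonneg _).trans ha)

lemma abs_sub_le' (a b : ℝ) : |a - b| ≤ |a| + |b| := by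
  calc |a - b| = |a + (-b)| := by ring_nf
  _ ≤ |a| + |(-b)| := abs_add_le _ _
  _ = |a| + |b| := by rw [abs_neg]

lemma tendsto_exp_sub_atTop (x : ℝ) : Tendsto (fun y => Real.exp (x - y)) atTop (𝓝 0) := by
  apply Real.tendsto_exp_atBot.comp
  have : Tendsto (fun y : ℝ => -(y - x)) atTop atBot := by
    apply Filter.tendsto_neg_atTop_atBot.comp
    exact tendsto_atTop_add_const_right atTop (-x) tendsto_id
  simpa [neg_sub] using this

lemma tendsto_exp_sub_atBot (x : ℝ) : Tendsto (fun y => Real.exp (y - x)) atBot (𝓝 0) := by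
  apply Real.tendsto_exp_atBot.comp
  exact tendsto_atBot_add_const_right atBot (-x) tendsto_id

/-! ### Integrability on half-lines -/

lemma intOn_Iic (x : ℝ) {h : ℝ → ℝ} (hc : Continuous h) {K : ℝ} (hK : ∀ y, |h y| ≤ K) :
    IntegrableOn (fun y => Real.exp (y - x) * h y) (Iic x) := by
  have h1 : IntegrableOn (fun y => Real.exp (y - x) * K) (Iic x) := by
    have := (integrableOn_exp_Iic x).mul_const (Real.exp (-x) * K)
    refine MeasureTheory.IntegrableOn.congr_fun this (fun y _ => ?_) measurableSet_Iic
    rw [Real.exp_sub, Real.exp_neg]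
    ring
  refine Integrable.mono' h1 ?_ ?_
  · exact ((Real.continuous_exp.comp (continuous_id.sub continuous_const)).mul hc).aestronglyMeasurable
  · filter_upwards with y
    rw [Real.norm_eq_abs, abs_mul, abs_of_pos (Real.exp_pos _)]
    exact mul_le_mul_of_nonneg_left (hK y) (Real.exp_pos _).le

lemma intOn_exp_Ioi (x : ℝ) : IntegrableOn (fun y => Real.exp (x - y)) (Ioi x) := by
  refine integrableOn_Ioi_deriv_of_nonneg' (l := 0) (g := fun y => -Real.exp (x - y)) (fun y _ => ?_)
    (fun y _ => (Real.exp_pos _).le) ?_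
  · have h1 : HasDerivAt (fun y : ℝ => x - y) (-1) y := (hasDerivAt_id y).const_sub x
    have h2 := (Real.hasDerivAt_exp (x - y)).comp y h1
    have h3 := h2.neg
    refine h3.congr_deriv ?_
    simp [Function.comp_def]
  · simpa using (tendsto_exp_sub_atTop x).neg

lemma intOn_Ici (x : ℝ) {h : ℝ → ℝ} (hc : Continuous h) {K : ℝ} (hK : ∀ y, |h y| ≤ K) :
    IntegrableOn (fun y => Real.exp (x - y) * h y) (Ici x) := by
  rw [integrableOn_Ici_iff_integrableOn_Ioi]
  have h1 : IntegrableOn (fun y => Real.exp (x - y) * K) (Ioi x) := (intOn_exp_Ioi x).mul_const K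
  refine Integrable.mono' h1 ?_ ?_
  · exact ((Real.continuous_exp.comp (continuous_const.sub continuous_id)).mul hc).aestronglyMeasurable
  · filter_upwards with y
    rw [Real.norm_eq_abs, abs_mul, abs_of_pos (Real.exp_pos _)]
    exact mul_le_mul_of_nonneg_left (hK y) (Real.exp_pos _).le

/-! ### Fundamental theorem of calculus on half-lines with exponential weight -/

lemma Lplus {φ φ' : ℝ → ℝ} (x : ℝ) (hd : ∀ y, HasDerivAt φ (φ' y) y)
    {K : ℝ} (hK : ∀ y, |φ y| ≤ K)
    (hint : IntegrableOn (fun y => Real.exp (y - x) * (φ y + φ' y)) (Iic x)) :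
    ∫ y in Iic x, Real.exp (y - x) * (φ y + φ' y) = φ x := by
  have hF : ∀ y ∈ Iic x, HasDerivAt (fun y => Real.exp (y - x) * φ y)
      (Real.exp (y - x) * (φ y + φ' y)) y := by
    intro y _
    have he : HasDerivAt (fun y => Real.exp (y - x)) (Real.exp (y - x)) y := by
      have h1 : HasDerivAt (fun y : ℝ => y - x) (1) y := (hasDerivAt_id y).sub_const x
      simpa [Function.comp_def] using (Real.hasDerivAt_exp (y - x)).comp y h1
    have := he.mul (hd y)
    refine this.congr_deriv ?_
    ring
  have htend : Tendsto (fun y => Real.exp (y - x) * φ y) atBot (𝓝 0) := by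
    apply squeeze_zero_norm (a := fun y => Real.exp (y - x) * K)
    · intro y
      rw [Real.norm_eq_abs, abs_mul, abs_of_pos (Real.exp_pos _)]
      exact mul_le_mul_of_nonneg_left (hK y) (Real.exp_pos _).le
    · simpa using (tendsto_exp_sub_atBot x).mul_const K
  have h := integral_Iic_of_hasDerivAt_of_tendsto' hF hint htend
  simpa using h

lemma Lminus {φ φ' : ℝ → ℝ} (x : ℝ) (hd : ∀ y, HasDerivAt φ (φ' y) y)
    {K : ℝ} (hK : ∀ y, |φ y| ≤ K)
    (hint : IntegrableOn (fun y => Real.exp (x - y) * (φ y - φ' y)) (Ici x)) :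
    ∫ y in Ici x, Real.exp (x - y) * (φ y - φ' y) = φ x := by
  have hF : ∀ y ∈ Ici x, HasDerivAt (fun y => Real.exp (x - y) * φ y)
      (-(Real.exp (x - y) * (φ y - φ' y))) y := by
    intro y _
    have he : HasDerivAt (fun y => Real.exp (x - y)) (-Real.exp (x - y)) y := by
      have h1 : HasDerivAt (fun y : ℝ => x - y) (-1) y := (hasDerivAt_id y).const_sub x
      have := (Real.hasDerivAt_exp (x - y)).comp y h1
      simpa [Function.comp_def] using this
    have := he.mul (hd y)
    refine this.congr_deriv ?_
    ring
  have htend : Tendsto (fun y => Real.exp (x - y) * φ y) atTop (𝓝 0) := by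
    apply squeeze_zero_norm (a := fun y => Real.exp (x - y) * K)
    · intro y
      rw [Real.norm_eq_abs, abs_mul, abs_of_pos (Real.exp_pos _)]
      exact mul_le_mul_of_nonneg_left (hK y) (Real.exp_pos _).le
    · simpa using (tendsto_exp_sub_atTop x).mul_const K
  have hint' : IntegrableOn (fun y => -(Real.exp (x - y) * (φ y - φ' y))) (Ioi x) :=
    (hint.mono_set Ioi_subset_Ici_self).neg
  have h := integral_Ioi_of_hasDerivAt_of_tendsto' hF hint' htend
  rw [MeasureTheory.integral_Ici_eq_integral_Ioi]
  have h2 : ∫ y in Ioi x, -(Real.exp (x - y) * (φ y - φ' y)) =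
      -∫ y in Ioi x, Real.exp (x - y) * (φ y - φ' y) := MeasureTheory.integral_neg _
  rw [h2] at h
  simp only [sub_self, Real.exp_zero, one_mul, zero_sub] at h
  linarith [h]

/-! ### Splitting the convolution into half-line pieces -/

lemma pConv_split (x : ℝ) {h : ℝ → ℝ} (hc : Continuous h) {K : ℝ} (hK : ∀ y, |h y| ≤ K) :
    pConv h x = (1/2) * ((∫ y in Set.Iic x, Real.exp (y - x) * h y)
      + ∫ y in Set.Ici x, Real.exp (x - y) * h y) := by
  have habs1 : ∀ y ∈ Set.Iic x, -|x - y| = y - x := by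
    intro y hy
    rw [abs_of_nonneg (sub_nonneg.2 hy)]; ring
  have habs2 : ∀ y ∈ Set.Ioi x, -|x - y| = x - y := by
    intro y hy
    rw [abs_of_nonpos (sub_nonpos.2 (le_of_lt hy))]; ring
  have hIic : IntegrableOn (fun y => (1/2) * Real.exp (-|x - y|) * h y) (Set.Iic x) := by
    refine MeasureTheory.IntegrableOn.congr_fun ((intOn_Iic x hc hK).const_mul (1/2))
      (fun y hy => ?_) measurableSet_Iic
    rw [habs1 y hy]; ring
  have hIoi : IntegrableOn (fun y => (1/2) * Real.exp (-|x - y|) * h y) (Set.Ioi x) := by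
    refine MeasureTheory.IntegrableOn.congr_fun
      (((intOn_Ici x hc hK).mono_set Set.Ioi_subset_Ici_self).const_mul (1/2))
      (fun y hy => ?_) measurableSet_Ioi
    rw [habs2 y hy]; ring
  have hsum := intervalIntegral.integral_Iic_add_Ioi (b := x) hIic hIoi
  have e1 : ∫ y in Set.Iic x, (1/2) * Real.exp (-|x - y|) * h y
      = (1/2) * ∫ y in Set.Iic x, Real.exp (y - x) * h y := by
    rw [← MeasureTheory.integral_const_mul]
    refine MeasureTheory.setIntegral_congr_fun measurableSet_Iic fun y hy => ?_
    rw [habs1 y hy]; ring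
  have e2 : ∫ y in Set.Ioi x, (1/2) * Real.exp (-|x - y|) * h y
      = (1/2) * ∫ y in Set.Ici x, Real.exp (x - y) * h y := by
    rw [MeasureTheory.integral_Ici_eq_integral_Ioi, ← MeasureTheory.integral_const_mul]
    refine MeasureTheory.setIntegral_congr_fun measurableSet_Ioi fun y hy => ?_
    rw [habs2 y hy]; ring
  show (∫ y : ℝ, (1/2) * Real.exp (-|x - y|) * h y) = _
  rw [← hsum, e1, e2]
  ring

/-! ### Partial derivatives of smooth functions on `ℝ × ℝ` -/

noncomputable def Dx (F : ℝ × ℝ → ℝ) : ℝ × ℝ → ℝ := fun p => fderiv ℝ F p (0, 1)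
noncomputable def Dt (F : ℝ × ℝ → ℝ) : ℝ × ℝ → ℝ := fun p => fderiv ℝ F p (1, 0)

lemma topsucc : ((⊤ : ℕ∞) : WithTop ℕ∞) + 1 ≤ ((⊤ : ℕ∞) : WithTop ℕ∞) := by
  norm_cast

lemma diffTop {F : ℝ × ℝ → ℝ} (hF : ContDiff ℝ (⊤ : ℕ∞) F) : Differentiable ℝ F :=
  hF.differentiable (by norm_cast)

lemma hasDerivAt_snd {F : ℝ × ℝ → ℝ} (hF : Differentiable ℝ F) (t x : ℝ) :
    HasDerivAt (fun y => F (t, y)) (Dx F (t, x)) x := by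
  have h1 : HasDerivAt (fun y : ℝ => ((t, y) : ℝ × ℝ)) ((0 : ℝ), (1 : ℝ)) x :=
    (hasDerivAt_const x t).prodMk (hasDerivAt_id x)
  exact (hF (t, x)).hasFDerivAt.comp_hasDerivAt x h1

lemma hasDerivAt_fst {F : ℝ × ℝ → ℝ} (hF : Differentiable ℝ F) (t x : ℝ) :
    HasDerivAt (fun s => F (s, x)) (Dt F (t, x)) t := by
  have h1 : HasDerivAt (fun s : ℝ => ((s, x) : ℝ × ℝ)) ((1 : ℝ), (0 : ℝ)) t :=
    (hasDerivAt_id t).prodMk (hasDerivAt_const t x)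
  exact (hF (t, x)).hasFDerivAt.comp_hasDerivAt t h1

lemma contDiff_Dx {F : ℝ × ℝ → ℝ} (hF : ContDiff ℝ (⊤ : ℕ∞) F) :
    ContDiff ℝ (⊤ : ℕ∞) (Dx F) :=
  (hF.fderiv_right topsucc).clm_apply contDiff_const

lemma contDiff_Dt {F : ℝ × ℝ → ℝ} (hF : ContDiff ℝ (⊤ : ℕ∞) F) :
    ContDiff ℝ (⊤ : ℕ∞) (Dt F) :=
  (hF.fderiv_right topsucc).clm_apply contDiff_const

lemma fderiv_Dv {F : ℝ × ℝ → ℝ} (hF : ContDiff ℝ (⊤ : ℕ∞) F) (v w p : ℝ × ℝ) :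
    fderiv ℝ (fun q => fderiv ℝ F q v) p w = fderiv ℝ (fderiv ℝ F) p w v := by
  have hdf : DifferentiableAt ℝ (fderiv ℝ F) p :=
    ((hF.fderiv_right topsucc).differentiable (by norm_cast)) p
  rw [fderiv_clm_apply hdf (differentiableAt_const v)]
  simp

/-- Clairaut / Schwarz symmetry of mixed partial derivatives. -/
lemma Dt_Dx {F : ℝ × ℝ → ℝ} (hF : ContDiff ℝ (⊤ : ℕ∞) F) (p : ℝ × ℝ) :
    Dt (Dx F) p = Dx (Dt F) p := by
  have hs : ∀ v w : ℝ × ℝ, fderiv ℝ (fderiv ℝ F) p v w = fderiv ℝ (fderiv ℝ F) p w v :=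
    hF.contDiffAt.isSymmSndFDerivAt (by simp only [minSmoothness_of_isRCLikeNormedField]; norm_cast)
  show fderiv ℝ (fun q => fderiv ℝ F q (0,1)) p (1,0)
      = fderiv ℝ (fun q => fderiv ℝ F q (1,0)) p (0,1)
  rw [fderiv_Dv hF (0,1) (1,0) p, fderiv_Dv hF (1,0) (0,1) p, hs]

end Stmt8Aux

section CoreSection
open Stmt8Aux Filter Topology

/-- The core analytic computation, for functions of one variable. -/
theorem stmt8_core (a b d e v0 v1 v2 : ℝ → ℝ) (C : ℝ)
    (hda : ∀ y, HasDerivAt a (b y) y) (hdb : ∀ y, HasDerivAt b (d y) y)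
    (hdd : ∀ y, HasDerivAt d (e y) y)
    (hdv0 : ∀ y, HasDerivAt v0 (v1 y) y) (hdv1 : ∀ y, HasDerivAt v1 (v2 y) y)
    (hbnd : ∀ y, |a y| ≤ C ∧ |b y| ≤ C ∧ |d y| ≤ C ∧ |v0 y| ≤ C ∧ |v1 y| ≤ C)
    (hPDE : ∀ y, v0 y - v2 y +
      (Real.cos (a y ^ 2 - b y ^ 2) * (2 * a y * b y - 2 * b y * d y) * (a y - d y)
        + Real.sin (a y ^ 2 - b y ^ 2) * (b y - e y)) = 0)
    (x : ℝ) :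
    (v0 x + Real.sin (a x ^ 2 - b x ^ 2) * b x
      = -2 * pConv (fun y => a y * (Real.cos (a y ^ 2 - b y ^ 2) * (a y - d y) * b y)) x
        - 2 * (pMinus (fun y => b y * (Real.cos (a y ^ 2 - b y ^ 2) * (a y - d y) * b y)) x
                - pPlus (fun y => b y * (Real.cos (a y ^ 2 - b y ^ 2) * (a y - d y) * b y)) x)) ∧
    (v1 x + Real.sin (a x ^ 2 - b x ^ 2) * d x
      = -2 * (pMinus (fun y => a y * (Real.cos (a y ^ 2 - b y ^ 2) * (a y - d y) * b y)) x
                - pPlus (fun y => a y * (Real.cos (a y ^ 2 - b y ^ 2) * (a y - d y) * b y)) x)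
        - 2 * pConv (fun y => b y * (Real.cos (a y ^ 2 - b y ^ 2) * (a y - d y) * b y)) x) := by
  have ca : Continuous a := continuous_iff_continuousAt.2 fun y => (hda y).continuousAt
  have cb : Continuous b := continuous_iff_continuousAt.2 fun y => (hdb y).continuousAt
  have cd : Continuous d := continuous_iff_continuousAt.2 fun y => (hdd y).continuousAt
  set P : ℝ → ℝ := fun y => a y * (Real.cos (a y ^ 2 - b y ^ 2) * (a y - d y) * b y) with hPdef
  set Q : ℝ → ℝ := fun y => b y * (Real.cos (a y ^ 2 - b y ^ 2) * (a y - d y) * b y) with hQdef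
  have cP : Continuous P := by
    rw [hPdef]; fun_prop
  have cQ : Continuous Q := by
    rw [hQdef]; fun_prop
  have had : ∀ y, |a y - d y| ≤ C + C := fun y =>
    (abs_sub_le' _ _).trans (add_le_add (hbnd y).1 (hbnd y).2.2.1)
  have hinner : ∀ y, |Real.cos (a y ^ 2 - b y ^ 2) * (a y - d y) * b y| ≤ 1 * (C + C) * C :=
    fun y => abs_mul_le (abs_mul_le (Real.abs_cos_le_one _) (had y)) (hbnd y).2.1
  have hP : ∀ y, |P y| ≤ C * (1 * (C + C) * C) := fun y =>
    abs_mul_le (hbnd y).1 (hinner y)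
  have hQ : ∀ y, |Q y| ≤ C * (1 * (C + C) * C) := fun y =>
    abs_mul_le (hbnd y).2.1 (hinner y)
  have hsin : ∀ y, HasDerivAt (fun y => Real.sin (a y ^ 2 - b y ^ 2))
      (Real.cos (a y ^ 2 - b y ^ 2) * (2 * a y * b y - 2 * b y * d y)) y := by
    intro y
    have h1 : HasDerivAt (fun y => a y ^ 2 - b y ^ 2) (2 * a y * b y - 2 * b y * d y) y := by
      have := ((hda y).pow 2).sub ((hdb y).pow 2)
      refine this.congr_deriv ?_
      push_cast
      ring
    exact h1.sin
  set φp : ℝ → ℝ := fun y => v0 y - v1 y + Real.sin (a y ^ 2 - b y ^ 2) * (b y - d y) with hφp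
  set φp' : ℝ → ℝ := fun y => v1 y - v2 y +
      (Real.cos (a y ^ 2 - b y ^ 2) * (2 * a y * b y - 2 * b y * d y) * (b y - d y)
        + Real.sin (a y ^ 2 - b y ^ 2) * (d y - e y)) with hφp'
  set φm : ℝ → ℝ := fun y => v0 y + v1 y + Real.sin (a y ^ 2 - b y ^ 2) * (b y + d y) with hφm
  set φm' : ℝ → ℝ := fun y => v1 y + v2 y +
      (Real.cos (a y ^ 2 - b y ^ 2) * (2 * a y * b y - 2 * b y * d y) * (b y + d y)
        + Real.sin (a y ^ 2 - b y ^ 2) * (d y + e y)) with hφm'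
  have hdφp : ∀ y, HasDerivAt φp (φp' y) y := by
    intro y
    have := ((hdv0 y).sub (hdv1 y)).add ((hsin y).mul ((hdb y).sub (hdd y)))
    rw [hφp, hφp']
    exact this
  have hdφm : ∀ y, HasDerivAt φm (φm' y) y := by
    intro y
    have := ((hdv0 y).add (hdv1 y)).add ((hsin y).mul ((hdb y).add (hdd y)))
    rw [hφm, hφm']
    exact this
  have hbd : ∀ y, |b y - d y| ≤ C + C := fun y =>
    (abs_sub_le' _ _).trans (add_le_add (hbnd y).2.1 (hbnd y).2.2.1)
  have hbd' : ∀ y, |b y + d y| ≤ C + C := fun y =>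
    (abs_add_le _ _).trans (add_le_add (hbnd y).2.1 (hbnd y).2.2.1)
  have hφpbnd : ∀ y, |φp y| ≤ C + C + 1 * (C + C) := by
    intro y
    rw [hφp]
    refine (abs_add_le _ _).trans (add_le_add ?_ ?_)
    · exact (abs_sub_le' _ _).trans (add_le_add (hbnd y).2.2.2.1 (hbnd y).2.2.2.2)
    · exact abs_mul_le (Real.abs_sin_le_one _) (hbd y)
  have hφmbnd : ∀ y, |φm y| ≤ C + C + 1 * (C + C) := by
    intro y
    rw [hφm]
    refine (abs_add_le _ _).trans (add_le_add ?_ ?_)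
    · exact (abs_add_le _ _).trans (add_le_add (hbnd y).2.2.2.1 (hbnd y).2.2.2.2)
    · exact abs_mul_le (Real.abs_sin_le_one _) (hbd' y)
  have iP_Iic := intOn_Iic x cP hP
  have iQ_Iic := intOn_Iic x cQ hQ
  have iP_Ici := intOn_Ici x cP hP
  have iQ_Ici := intOn_Ici x cQ hQ
  have hIp : (fun y => Real.exp (y - x) * (φp y + φp' y))
      = fun y => (-2) * (Real.exp (y - x) * P y) + 2 * (Real.exp (y - x) * Q y) := by
    funext y
    rw [hφp, hφp', hPdef, hQdef]
    simp only
    linear_combination Real.exp (y - x) * hPDE y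
  have hIm : (fun y => Real.exp (x - y) * (φm y - φm' y))
      = fun y => (-2) * (Real.exp (x - y) * P y) + (-2) * (Real.exp (x - y) * Q y) := by
    funext y
    rw [hφm, hφm', hPdef, hQdef]
    simp only
    linear_combination Real.exp (x - y) * hPDE y
  have i1 : IntegrableOn (fun y => Real.exp (y - x) * (φp y + φp' y)) (Set.Iic x) := by
    rw [hIp]
    exact (iP_Iic.const_mul _).add (iQ_Iic.const_mul _)
  have i2 : IntegrableOn (fun y => Real.exp (x - y) * (φm y - φm' y)) (Set.Ici x) := by
    rw [hIm]
    exact (iP_Ici.const_mul _).add (iQ_Ici.const_mul _)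
  have hplus : (-2) * (∫ y in Set.Iic x, Real.exp (y - x) * P y)
      + 2 * (∫ y in Set.Iic x, Real.exp (y - x) * Q y)
      = v0 x - v1 x + Real.sin (a x ^ 2 - b x ^ 2) * (b x - d x) := by
    have h0 := Lplus x hdφp hφpbnd i1
    rw [hIp] at h0
    rw [MeasureTheory.integral_add (iP_Iic.const_mul _) (iQ_Iic.const_mul _),
      MeasureTheory.integral_const_mul, MeasureTheory.integral_const_mul] at h0
    rw [hφp] at h0
    exact h0
  have hminus : (-2) * (∫ y in Set.Ici x, Real.exp (x - y) * P y)
      + (-2) * (∫ y in Set.Ici x, Real.exp (x - y) * Q y)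
      = v0 x + v1 x + Real.sin (a x ^ 2 - b x ^ 2) * (b x + d x) := by
    have h0 := Lminus x hdφm hφmbnd i2
    rw [hIm] at h0
    rw [MeasureTheory.integral_add (iP_Ici.const_mul _) (iQ_Ici.const_mul _),
      MeasureTheory.integral_const_mul, MeasureTheory.integral_const_mul] at h0
    rw [hφm] at h0
    exact h0
  constructor
  · rw [pConv_split x cP hP]
    simp only [pMinus, pPlus]
    linear_combination (-1/2) * hplus + (-1/2) * hminus
  · rw [pConv_split x cQ hQ]
    simp only [pMinus, pPlus]
    linear_combination hplus / 2 - hminus / 2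

end CoreSection

theorem stmt8 (u : ℝ → ℝ → ℝ) (hu : ContDiff ℝ (⊤ : ℕ∞) (Function.uncurry u))
    (heq : ∀ t x : ℝ, pdt (mF u) t x
      + pdx (fun s y => Real.sin ((u s y) ^ 2 - (pdx u s y) ^ 2) * mF u s y) t x = 0)
    (hb : ∀ t : ℝ, ∃ C : ℝ, ∀ x : ℝ,
      |u t x| ≤ C ∧ |pdx u t x| ≤ C ∧ |pdx (pdx u) t x| ≤ C ∧ |pdx (pdx (pdx u)) t x| ≤ C ∧
      |pdt u t x| ≤ C ∧ |pdt (pdx u) t x| ≤ C ∧ |pdt (pdx (pdx u)) t x| ≤ C) :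
    ∀ t x : ℝ,
      (pdt u t x + Real.sin ((u t x) ^ 2 - (pdx u t x) ^ 2) * pdx u t x
        = -2 * pConv (fun y => u t y * MF u t y) x
          - 2 * (pMinus (fun y => pdx u t y * MF u t y) x
                  - pPlus (fun y => pdx u t y * MF u t y) x)) ∧
      (pdx (pdt u) t x + Real.sin ((u t x) ^ 2 - (pdx u t x) ^ 2) * pdx (pdx u) t x
        = -2 * (pMinus (fun y => u t y * MF u t y) x
                  - pPlus (fun y => u t y * MF u t y) x)
          - 2 * pConv (fun y => pdx u t y * MF u t y) x) := by
  classical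
  intro t x
  set F : ℝ × ℝ → ℝ := Function.uncurry u with hFdef
  have hF : ContDiff ℝ (⊤ : ℕ∞) F := hu
  set F1 : ℝ × ℝ → ℝ := Stmt8Aux.Dx F with hF1def
  set F2 : ℝ × ℝ → ℝ := Stmt8Aux.Dx F1 with hF2def
  set F3 : ℝ × ℝ → ℝ := Stmt8Aux.Dx F2 with hF3def
  set G0 : ℝ × ℝ → ℝ := Stmt8Aux.Dt F with hG0def
  set G1 : ℝ × ℝ → ℝ := Stmt8Aux.Dx G0 with hG1def
  set G2 : ℝ × ℝ → ℝ := Stmt8Aux.Dx G1 with hG2def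
  have hF1 : ContDiff ℝ (⊤ : ℕ∞) F1 := Stmt8Aux.contDiff_Dx hF
  have hF2 : ContDiff ℝ (⊤ : ℕ∞) F2 := Stmt8Aux.contDiff_Dx hF1
  have hG0 : ContDiff ℝ (⊤ : ℕ∞) G0 := Stmt8Aux.contDiff_Dt hF
  have hG1 : ContDiff ℝ (⊤ : ℕ∞) G1 := Stmt8Aux.contDiff_Dx hG0
  have dF := Stmt8Aux.diffTop hF
  have dF1 := Stmt8Aux.diffTop hF1
  have dF2 := Stmt8Aux.diffTop hF2
  have dG0 := Stmt8Aux.diffTop hG0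
  have dG1 := Stmt8Aux.diffTop hG1
  -- identification of the partial derivatives
  have hpdx : ∀ s y : ℝ, pdx u s y = F1 (s, y) := fun s y =>
    (Stmt8Aux.hasDerivAt_snd dF s y).deriv
  have hpdx2 : ∀ s y : ℝ, pdx (pdx u) s y = F2 (s, y) := by
    intro s y
    show deriv (fun y' => pdx u s y') y = _
    rw [funext (hpdx s)]
    exact (Stmt8Aux.hasDerivAt_snd dF1 s y).deriv
  have hpdx3 : ∀ s y : ℝ, pdx (pdx (pdx u)) s y = F3 (s, y) := by
    intro s y
    show deriv (fun y' => pdx (pdx u) s y') y = _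
    rw [funext (hpdx2 s)]
    exact (Stmt8Aux.hasDerivAt_snd dF2 s y).deriv
  have hpdt : ∀ s y : ℝ, pdt u s y = G0 (s, y) := fun s y =>
    (Stmt8Aux.hasDerivAt_fst dF s y).deriv
  have hpdtx : ∀ s y : ℝ, pdx (pdt u) s y = G1 (s, y) := by
    intro s y
    show deriv (fun y' => pdt u s y') y = _
    rw [funext (hpdt s)]
    exact (Stmt8Aux.hasDerivAt_snd dG0 s y).deriv
  have hDtF1 : ∀ p : ℝ × ℝ, Stmt8Aux.Dt F1 p = G1 p := fun p => Stmt8Aux.Dt_Dx hF p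
  have hDtF2 : ∀ p : ℝ × ℝ, Stmt8Aux.Dt F2 p = G2 p := by
    intro p
    have h1 : Stmt8Aux.Dt F2 p = Stmt8Aux.Dx (Stmt8Aux.Dt F1) p := Stmt8Aux.Dt_Dx hF1 p
    rw [h1, funext hDtF1]
  have hpdxt : ∀ s y : ℝ, pdt (pdx u) s y = G1 (s, y) := by
    intro s y
    show deriv (fun s' => pdx u s' y) s = _
    have : (fun s' => pdx u s' y) = fun s' => F1 (s', y) := funext fun s' => hpdx s' y
    rw [this]
    rw [(Stmt8Aux.hasDerivAt_fst dF1 s y).deriv]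
    exact hDtF1 (s, y)
  have hpdxxt : ∀ s y : ℝ, pdt (pdx (pdx u)) s y = G2 (s, y) := by
    intro s y
    show deriv (fun s' => pdx (pdx u) s' y) s = _
    have : (fun s' => pdx (pdx u) s' y) = fun s' => F2 (s', y) := funext fun s' => hpdx2 s' y
    rw [this]
    rw [(Stmt8Aux.hasDerivAt_fst dF2 s y).deriv]
    exact hDtF2 (s, y)
  have hpdtxx : ∀ s y : ℝ, pdx (pdx (pdt u)) s y = G2 (s, y) := by
    intro s y
    show deriv (fun y' => pdx (pdt u) s y') y = _
    rw [funext (hpdtx s)]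
    exact (Stmt8Aux.hasDerivAt_snd dG1 s y).deriv
  -- the PDE in pointwise form
  have hPDE : ∀ y : ℝ, G0 (t, y) - G2 (t, y) +
      (Real.cos (u t y ^ 2 - F1 (t, y) ^ 2)
          * (2 * u t y * F1 (t, y) - 2 * F1 (t, y) * F2 (t, y)) * (u t y - F2 (t, y))
        + Real.sin (u t y ^ 2 - F1 (t, y) ^ 2) * (F1 (t, y) - F3 (t, y))) = 0 := by
    intro y
    have h := heq t y
    have e1 : pdt (mF u) t y = G0 (t, y) - G2 (t, y) := by
      show deriv (fun s => mF u s y) t = _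
      have hfun : (fun s => mF u s y) = fun s => F (s, y) - F2 (s, y) := by
        funext s
        show u s y - pdx (pdx u) s y = _
        rw [hpdx2 s y]
        rfl
      rw [hfun]
      rw [(show HasDerivAt (fun s => F (s, y) - F2 (s, y)) _ t from (Stmt8Aux.hasDerivAt_fst dF t y).sub (Stmt8Aux.hasDerivAt_fst dF2 t y)).deriv]
      rw [hDtF2 (t, y)]
    have e2 : pdx (fun s y => Real.sin ((u s y) ^ 2 - (pdx u s y) ^ 2) * mF u s y) t y
        = Real.cos (u t y ^ 2 - F1 (t, y) ^ 2)
            * (2 * u t y * F1 (t, y) - 2 * F1 (t, y) * F2 (t, y)) * (u t y - F2 (t, y))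
          + Real.sin (u t y ^ 2 - F1 (t, y) ^ 2) * (F1 (t, y) - F3 (t, y)) := by
      show deriv (fun z => Real.sin ((u t z) ^ 2 - (pdx u t z) ^ 2) * mF u t z) y = _
      have hfun : (fun z => Real.sin ((u t z) ^ 2 - (pdx u t z) ^ 2) * mF u t z)
          = fun z => Real.sin ((F (t, z)) ^ 2 - (F1 (t, z)) ^ 2) * (F (t, z) - F2 (t, z)) := by
        funext z
        show Real.sin ((u t z) ^ 2 - (pdx u t z) ^ 2) * (u t z - pdx (pdx u) t z) = _
        rw [hpdx t z, hpdx2 t z]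
        rfl
      rw [hfun]
      have hd0 : HasDerivAt
          (fun z => Real.sin ((F (t, z)) ^ 2 - (F1 (t, z)) ^ 2) * (F (t, z) - F2 (t, z)))
          (Real.cos (F (t, y) ^ 2 - F1 (t, y) ^ 2)
              * (2 * F (t, y) * F1 (t, y) - 2 * F1 (t, y) * F2 (t, y)) * (F (t, y) - F2 (t, y))
            + Real.sin (F (t, y) ^ 2 - F1 (t, y) ^ 2) * (F1 (t, y) - F3 (t, y))) y := by
        have hW : HasDerivAt (fun z => (F (t, z)) ^ 2 - (F1 (t, z)) ^ 2)
            (2 * F (t, y) * F1 (t, y) - 2 * F1 (t, y) * F2 (t, y)) y := by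
          have := ((Stmt8Aux.hasDerivAt_snd dF t y).pow 2).sub
            ((Stmt8Aux.hasDerivAt_snd dF1 t y).pow 2)
          refine this.congr_deriv ?_
          push_cast
          ring
        exact hW.sin.mul ((Stmt8Aux.hasDerivAt_snd dF t y).sub (Stmt8Aux.hasDerivAt_snd dF2 t y))
      rw [hd0.deriv]
      rfl
    rw [e1, e2] at h
    exact h
  -- bounds
  obtain ⟨C, hC⟩ := hb t
  have hCb : ∀ y : ℝ, |u t y| ≤ C ∧ |F1 (t, y)| ≤ C ∧ |F2 (t, y)| ≤ C ∧ |G0 (t, y)| ≤ C ∧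
      |G1 (t, y)| ≤ C := by
    intro y
    obtain ⟨h1, h2, h3, _, h5, h6, _⟩ := hC y
    rw [hpdx t y] at h2
    rw [hpdx2 t y] at h3
    rw [hpdt t y] at h5
    rw [hpdxt t y] at h6
    exact ⟨h1, h2, h3, h5, h6⟩
  -- rewrite the goal in terms of F, F1, F2, G0, G1
  simp only [MF, mF]
  simp only [hpdx, hpdx2, hpdt, hpdtx]
  exact stmt8_core (fun y => u t y) (fun y => F1 (t, y)) (fun y => F2 (t, y))
    (fun y => F3 (t, y)) (fun y => G0 (t, y)) (fun y => G1 (t, y)) (fun y => G2 (t, y)) C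
    (fun y => Stmt8Aux.hasDerivAt_snd dF t y)
    (fun y => Stmt8Aux.hasDerivAt_snd dF1 t y)
    (fun y => Stmt8Aux.hasDerivAt_snd dF2 t y)
    (fun y => Stmt8Aux.hasDerivAt_snd dG0 t y)
    (fun y => Stmt8Aux.hasDerivAt_snd dG1 t y)
    hCb hPDE x
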